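/- For every n ∈ ℕ, a subshift X ⊆ Σ^ℤ has property (D) if and only if its n-block system X^[n] has property (D). -/
import Mathlib


open Set Filter Topology

/-! Basic symbolic dynamics notions.

* The alphabet is a nonempty finite type `A` with the discrete topology; `A^ℤ` and `A^ℕ`
  carry the product topology.
* A left-infinite sequence `x⁻ = (x_i)_{i ≤ 0}` is encoded as `u : ℕ → A` with `u n = x (-n)`.
* Finite words are lists, read left to right.
-/

/-- The shift `S`. -/
def shiftMap {A : Type*} (x : ℤ → A) : ℤ → A := fun i => x (i + 1)

/-- A subshift: a nonempty closed shift-invariant subset of `A^ℤ`. -/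
def IsSubshift {A : Type*} [TopologicalSpace A] (X : Set (ℤ → A)) : Prop :=
  X.Nonempty ∧ IsClosed X ∧ shiftMap '' X = X

/-- `X⁻`: the left-infinite rays of points of `X` (encoded via `u n = x (-n)`). -/
def Xminus {A : Type*} (X : Set (ℤ → A)) : Set (ℕ → A) :=
  {u | ∃ x ∈ X, ∀ n : ℕ, u n = x (-(n : ℤ))}

/-- The word `w` occurs in `x` (as a block of consecutive coordinates). -/
def Occurs {A : Type*} (w : List A) (x : ℤ → A) : Prop :=
  ∃ i : ℤ, ∀ j : Fin w.length, x (i + ((j : ℕ) : ℤ)) = w.get j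

/-- A finite word is admissible for `X` if it occurs in some point of `X`. -/
def Admissible {A : Type*} (X : Set (ℤ → A)) (w : List A) : Prop :=
  ∃ x ∈ X, Occurs w x

/-- The left ray `u` ends in the word `w`, i.e. `(x_{-k},…,x_0) = w` where `|w| = k+1`. -/
def EndsIn {A : Type*} (u : ℕ → A) (w : List A) : Prop :=
  ∀ j : Fin w.length, u (w.length - 1 - (j : ℕ)) = w.get j

/-- `Γ₁⁺(x⁻)`: the letters that can follow the left ray `u` in `X`. -/
def Gamma1 {A : Type*} (X : Set (ℤ → A)) (u : ℕ → A) : Set A :=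
  {σ | ∃ x ∈ X, (∀ n : ℕ, x (-(n : ℤ)) = u n) ∧ x 1 = σ}

/-- `x` carries the word `b` on the coordinate interval `[-(|b| - 1), 0]`. -/
def EndsAtZero {A : Type*} (x : ℤ → A) (b : List A) : Prop :=
  ∀ j : Fin b.length, x (((j : ℕ) : ℤ) - ((b.length : ℤ) - 1)) = b.get j

/-- `c ∈ ω⁺(b)`: every point of `X` carrying `b` ending at coordinate `0` can be modified
on the positive coordinates so as to continue with the word `c`. -/
def OmegaWord {A : Type*} (X : Set (ℤ → A)) (b c : List A) : Prop :=
  ∀ x ∈ X, EndsAtZero x b →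
    ∃ x' ∈ X, (∀ i : ℤ, i ≤ 0 → x' i = x i) ∧
      ∀ j : Fin c.length, x' (((j : ℕ) : ℤ) + 1) = c.get j

/-- `ω₁⁺(b)`. -/
def omega1 {A : Type*} (X : Set (ℤ → A)) (b : List A) : Set A :=
  {σ | OmegaWord X b [σ]}

/-- The word `(x_{-n},…,x_0)` read off the left ray `u`. -/
def lastWord {A : Type*} (u : ℕ → A) (n : ℕ) : List A :=
  List.ofFn fun j : Fin (n + 1) => u (n - (j : ℕ))

/-- `Δ₁⁺(x⁻) = ⋃ₙ ω₁⁺((x_{-n},…,x_0))`. -/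
def Delta1 {A : Type*} (X : Set (ℤ → A)) (u : ℕ → A) : Set A :=
  ⋃ n : ℕ, omega1 X (lastWord u n)

/-- Property g: `Δ₁⁺(x⁻) ≠ ∅` for every `x⁻ ∈ X⁻`. -/
def PropertyG {A : Type*} (X : Set (ℤ → A)) : Prop :=
  ∀ u ∈ Xminus X, (Delta1 X u).Nonempty

/-- A g-function for `X`, encoded as a total function `g : (ℕ → A) → A → ℝ`:
continuity (of the restriction to the graph of `Γ₁⁺`, i.e. of the map on
`{(x⁻,σ) : σ ∈ Γ₁⁺(x⁻)}`), values in `[0,1]` there, and the normalization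
`∑_{σ ∈ Γ₁⁺(x⁻)} g (x⁻, σ) = 1`. -/
def IsGFunction {A : Type*} [Fintype A] [TopologicalSpace A] (X : Set (ℤ → A))
    (g : (ℕ → A) → A → ℝ) : Prop :=
  ContinuousOn (fun p : (ℕ → A) × A => g p.1 p.2)
      {p : (ℕ → A) × A | p.1 ∈ Xminus X ∧ p.2 ∈ Gamma1 X p.1} ∧
  (∀ u ∈ Xminus X, ∀ σ ∈ Gamma1 X u, g u σ ∈ Set.Icc (0 : ℝ) 1) ∧
  (∀ u ∈ Xminus X, ∑ σ : A, (Gamma1 X u).indicator (g u) σ = 1)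

/-- Property (D): for every admissible word `b` and letter `σ` with `bσ` admissible there
is a word `a` with `ab` admissible and `σ ∈ ω₁⁺(ab)`. -/
def PropertyD {A : Type*} (X : Set (ℤ → A)) : Prop :=
  ∀ (b : List A) (σ : A), b ≠ [] → Admissible X (b ++ [σ]) →
    ∃ a : List A, a ≠ [] ∧ Admissible X (a ++ b) ∧ σ ∈ omega1 X (a ++ b)

/-- The `n`-block map, sending `x` to the sequence of its `n`-blocks. -/
def blockMap {A : Type*} (n : ℕ) (x : ℤ → A) : ℤ → (Fin n → A) :=
  fun i j => x (i + ((j : ℕ) : ℤ))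

/-- The `n`-block system of `X`, a subshift over the alphabet of `n`-blocks. -/
def blockSystem {A : Type*} (X : Set (ℤ → A)) (n : ℕ) : Set (ℤ → (Fin n → A)) :=
  blockMap n '' X

/-- A subshift is right instantaneous if `ω₁⁺(λ) ≠ ∅` for every letter `λ` occurring in
one of its points. -/
def RightInstantaneous {B : Type*} (Y : Set (ℤ → B)) : Prop :=
  ∀ β : B, Admissible Y [β] → (omega1 Y [β]).Nonempty

section Aux
variable {A : Type*} {X : Set (ℤ → A)}

/-- `x` reads word `w` starting at position `i`. -/
def Reads (x : ℤ → A) (i : ℤ) (w : List A) : Prop :=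
  ∀ q : ℕ, (h : q < w.length) → x (i + (q : ℤ)) = w[q]

lemma getElem_idx {l : List A} {i j : ℕ} (h : i = j) (hi : i < l.length) :
    l[i]'hi = l[j]'(h ▸ hi) := by subst h; rfl

lemma occurs_iff {w : List A} {x : ℤ → A} : Occurs w x ↔ ∃ i, Reads x i w := by
  unfold Occurs Reads
  refine exists_congr fun i => ?_
  constructor
  · intro h q hq; simpa [List.get_eq_getElem] using h ⟨q, hq⟩
  · intro h j; simpa [List.get_eq_getElem] using h j j.isLt

lemma endsAtZero_iff {w : List A} {x : ℤ → A} :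
    EndsAtZero x w ↔ Reads x (1 - w.length) w := by
  unfold EndsAtZero Reads
  constructor
  · intro h q hq
    have := h ⟨q, hq⟩
    simpa [List.get_eq_getElem, show (q : ℤ) - ((w.length : ℤ) - 1) = 1 - w.length + q by ring]
      using this
  · intro h j
    have := h j j.isLt
    simpa [List.get_eq_getElem, show (1 : ℤ) - w.length + (j : ℕ) = (j : ℕ) - ((w.length : ℤ) - 1) by ring]
      using this

lemma omega1_iff {w : List A} {σ : A} :
    σ ∈ omega1 X w ↔ ∀ x ∈ X, Reads x (1 - w.length) w →
      ∃ x' ∈ X, (∀ i : ℤ, i ≤ 0 → x' i = x i) ∧ x' 1 = σ := by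
  simp only [omega1, OmegaWord, Set.mem_setOf_eq, endsAtZero_iff]
  refine forall_congr' fun x => forall_congr' fun hx => imp_congr_right fun h => ?_
  refine exists_congr fun x' => and_congr_right fun _ => and_congr_right fun _ => ?_
  constructor
  · intro hw; simpa using hw ⟨0, by simp⟩
  · intro hw j
    have : j = ⟨0, by simp⟩ := by ext; simpa using Nat.lt_one_iff.mp (by simpa using j.isLt)
    subst this; simpa using hw

lemma reads_append {x : ℤ → A} {i : ℤ} {a b : List A} :
    Reads x i (a ++ b) ↔ Reads x i a ∧ Reads x (i + a.length) b := by
  unfold Reads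
  constructor
  · intro h
    refine ⟨fun q hq => ?_, fun q hq => ?_⟩
    · have := h q (by simp; omega)
      rwa [List.getElem_append_left hq] at this
    · have := h (a.length + q) (by simp; omega)
      rw [List.getElem_append_right (by omega)] at this
      rw [show i + ((a.length + q : ℕ) : ℤ) = i + (a.length:ℤ) + q by push_cast; ring] at this
      simpa [show a.length + q - a.length = q by omega] using this
  · rintro ⟨h1, h2⟩ q hq
    rcases lt_or_ge q a.length with hlt | hge
    · rw [List.getElem_append_left hlt]; exact h1 q hlt
    · rw [List.getElem_append_right hge]
      have := h2 (q - a.length) (by simp at hq; omega)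
      simpa [show i + a.length + ((q - a.length : ℕ) : ℤ) = i + q by
        push_cast [Nat.cast_sub hge]; ring] using this

lemma reads_ofFn {x : ℤ → A} {i : ℤ} {m : ℕ} {f : Fin m → A} :
    Reads x i (List.ofFn f) ↔ ∀ q : ℕ, (h : q < m) → x (i + q) = f ⟨q, h⟩ := by
  unfold Reads
  simp [List.getElem_ofFn]

lemma reads_block {n : ℕ} {x : ℤ → A} {i : ℤ} {W : List (Fin n → A)} :
    Reads (blockMap n x) i W ↔
      ∀ q : ℕ, (h : q < W.length) → ∀ k : Fin n, x (i + q + (k : ℕ)) = W[q] k := by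
  unfold Reads blockMap
  refine forall_congr' fun q => forall_congr' fun h => ?_
  rw [funext_iff]

lemma mem_blockSystem {n : ℕ} {y : ℤ → Fin n → A} :
    y ∈ blockSystem X n ↔ ∃ x ∈ X, ∀ (i : ℤ) (j : Fin n), y i j = x (i + (j : ℕ)) := by
  unfold blockSystem blockMap
  constructor
  · rintro ⟨x, hx, rfl⟩; exact ⟨x, hx, fun i j => rfl⟩
  · rintro ⟨x, hx, h⟩; exact ⟨x, hx, by funext i j; exact (h i j).symm⟩

lemma fwd_shift (hinv : shiftMap '' X = X) (m : ℕ) {x : ℤ → A} (hx : x ∈ X) :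
    (fun i => x (i + (m : ℤ))) ∈ X := by
  induction m with
  | zero => simpa using hx
  | succ k ih =>
    have : shiftMap (fun i => x (i + (k : ℤ))) ∈ X := by
      rw [← hinv]; exact ⟨_, ih, rfl⟩
    have he : shiftMap (fun i => x (i + (k : ℤ))) = fun i => x (i + ((k+1 : ℕ) : ℤ)) := by
      funext i; unfold shiftMap; congr 1; push_cast; ring
    rwa [he] at this

lemma bwd_shift (hinv : shiftMap '' X = X) (m : ℕ) {x : ℤ → A} (hx : x ∈ X) :
    ∃ x' ∈ X, ∀ i : ℤ, x' (i + (m : ℤ)) = x i := by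
  induction m with
  | zero => exact ⟨x, hx, by simp⟩
  | succ k ih =>
    obtain ⟨x', hx', h⟩ := ih
    have : x' ∈ shiftMap '' X := by rw [hinv]; exact hx'
    obtain ⟨x'', hx'', hs⟩ := this
    refine ⟨x'', hx'', fun i => ?_⟩
    have : x'' (i + ((k+1 : ℕ) : ℤ)) = shiftMap x'' (i + (k : ℤ)) := by
      unfold shiftMap; congr 1; push_cast; ring
    rw [this, hs, h]

end Aux

section Main
variable {A : Type*} {X : Set (ℤ → A)}

lemma dir1 (hinv : shiftMap '' X = X) (m : ℕ) (hD : PropertyD X) :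
    PropertyD (blockSystem X (m + 1)) := by
  intro B Sg hBne hadm
  obtain ⟨y₁, hy₁, hocc⟩ := hadm
  obtain ⟨x₁, hx₁, rfl⟩ := hy₁
  obtain ⟨i, hr⟩ := occurs_iff.mp hocc
  rw [reads_append, reads_block, reads_block] at hr
  obtain ⟨hrB, hrS⟩ := hr
  set L := B.length with hL
  have hL1 : 1 ≤ L := List.length_pos_iff.mpr hBne
  have hS : ∀ k : Fin (m+1), x₁ (i + (L:ℤ) + (k:ℕ)) = Sg k := by
    intro k
    have := hrS 0 (by simp) k
    simpa using this
  set b : List A := List.ofFn (fun q : Fin (L + m) => x₁ (i + ((q:ℕ):ℤ))) with hb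
  set σ : A := x₁ (i + (L:ℤ) + (m:ℤ)) with hσ
  have hbl : b.length = L + m := by simp [hb]
  have hbne : b ≠ [] := by
    rw [← List.length_pos_iff, hbl]; omega
  have hbget : ∀ q : ℕ, (h : q < b.length) → b[q] = x₁ (i + (q:ℤ)) := by
    intro q h; simp [hb]
  have hadmb : Admissible X (b ++ [σ]) := by
    refine ⟨x₁, hx₁, occurs_iff.mpr ⟨i, ?_⟩⟩
    rw [reads_append]
    constructor
    · intro q h; exact (hbget q h).symm
    · intro q h
      have hq0 : q = 0 := by simpa using h
      subst hq0
      show x₁ (i + (b.length : ℤ) + 0) = [σ][0]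
      rw [List.getElem_singleton, hσ, hbl]
      congr 1; push_cast; ring
  obtain ⟨a, hane, hadma, homega⟩ := hD b σ hbne hadmb
  set p := a.length with hp
  have hp1 : 1 ≤ p := List.length_pos_iff.mpr hane
  have habl : (a ++ b).length = p + (L + m) := by simp [hbl, hp]
  set A' : List (Fin (m+1) → A) :=
    List.ofFn (fun j : Fin p => fun k : Fin (m+1) =>
      (a ++ b)[(j:ℕ) + (k:ℕ)]'(by rw [habl]; have := j.isLt; have := k.isLt; omega)) with hA'
  have hA'len : A'.length = p := by simp [hA']
  have hABlen : (A' ++ B).length = p + L := by simp [hA'len, hL]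
  -- the b-part of a++b in terms of x₁
  have hab_b : ∀ q : ℕ, (h : q < p + (L + m)) → (hp2 : p ≤ q) →
      (a ++ b)[q]'(by rw [habl]; exact h) = x₁ (i + ((q - p : ℕ) : ℤ)) := by
    intro q h hp2
    rw [List.getElem_append_right (by omega)]
    exact hbget (q - a.length) (by rw [hbl]; omega)
  -- key: block letters of A'++B are windows of a++b
  have hkey : ∀ (j k : ℕ) (hj : j < p + L) (hk : k < m + 1),
      ((A' ++ B)[j]'(by rw [hABlen]; exact hj)) (⟨k, hk⟩ : Fin (m+1)) =
        (a ++ b)[j + k]'(by rw [habl]; omega) := by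
    intro j k hj hk
    rcases lt_or_ge j p with hjp | hjp
    · rw [List.getElem_append_left (by rwa [hA'len])]
      rw [List.getElem_of_eq hA', List.getElem_ofFn]
    · rw [List.getElem_append_right (by rwa [hA'len])]
      have h1 : j - A'.length < L := by rw [hA'len]; omega
      rw [← hrB (j - A'.length) h1 ⟨k, hk⟩, hab_b (j + k) (by omega) (by omega)]
      congr 1
      rw [hA'len]
      simp only [Fin.val_mk]
      omega
  refine ⟨A', by rw [← List.length_pos_iff, hA'len]; omega, ?_, ?_⟩
  · -- admissible
    obtain ⟨x₂, hx₂, hocc₂⟩ := hadma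
    obtain ⟨i₂, hr₂⟩ := occurs_iff.mp hocc₂
    refine ⟨blockMap (m+1) x₂, ⟨x₂, hx₂, rfl⟩, occurs_iff.mpr ⟨i₂, ?_⟩⟩
    rw [reads_block]
    intro q hq k
    have hq' : q < p + L := by rwa [hABlen] at hq
    rw [show (A' ++ B)[q] = (A' ++ B)[q]'(by rw [hABlen]; exact hq') from rfl]
    have := hkey q k hq' k.isLt
    rw [this]
    have := hr₂ (q + k) (by rw [habl]; have := k.isLt; omega)
    rw [← this]
    congr 1; push_cast; ring
  · -- omega1
    rw [omega1_iff]
    intro y hy hry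
    obtain ⟨x₃, hx₃, rfl⟩ := hy
    rw [reads_block] at hry
    set xt : ℤ → A := fun i' => x₃ (i' + (m:ℤ)) with hxt
    have hxtX : xt ∈ X := fwd_shift hinv m hx₃
    have hreads : Reads xt (1 - ((a ++ b).length : ℤ)) (a ++ b) := by
      intro q hq
      have hq' : q < p + L + m := by rw [habl] at hq; omega
      obtain ⟨j, k, hj, hk, hjk⟩ : ∃ j k : ℕ, j < p + L ∧ k < m + 1 ∧ j + k = q :=
        ⟨min q (p + L - 1), q - min q (p + L - 1), by omega, by omega, by omega⟩
      have h1 := hry j (by rw [hABlen]; exact hj) ⟨k, hk⟩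
      rw [hkey j k hj hk] at h1
      have : (a ++ b)[j + k]'(by rw [habl]; omega) = (a ++ b)[q]'hq := by
        congr 1 <;> try omega
      rw [this] at h1
      rw [← h1, hxt]
      simp only []
      congr 1
      rw [hABlen, habl]
      push_cast
      omega
    obtain ⟨x₄, hx₄, hag, hx41⟩ := omega1_iff.mp homega xt hxtX hreads
    obtain ⟨x₅, hx₅, h₅⟩ := bwd_shift hinv m hx₄
    refine ⟨blockMap (m+1) x₅, ⟨x₅, hx₅, rfl⟩, ?_, ?_⟩
    · intro i' hi'
      funext k
      show x₅ (i' + (k:ℕ)) = x₃ (i' + (k:ℕ))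
      have e5 := h₅ (i' + (k:ℕ) - m)
      rw [show i' + (k:ℕ) - m + m = i' + (k:ℕ) by ring] at e5
      rw [e5]
      have hle : i' + (k:ℕ) - m ≤ 0 := by have := k.isLt; omega
      rw [hag _ hle, hxt]
      simp only []
      congr 1; ring
    · funext k
      show x₅ (1 + (k:ℕ)) = Sg k
      have e5 := h₅ (1 + (k:ℕ) - m)
      rw [show (1:ℤ) + ((k:ℕ):ℤ) - (m:ℤ) + (m:ℤ) = 1 + ((k:ℕ):ℤ) by ring] at e5
      rw [e5]
      rcases eq_or_lt_of_le (Nat.le_of_lt_succ k.isLt) with hkm | hkm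
      · -- k = m
        rw [show (1:ℤ) + (k:ℕ) - m = 1 by rw [hkm]; push_cast; ring]
        rw [hx41, hσ, ← hS k]
        congr 1; omega
      · -- k < m
        have hle : 1 + ((k:ℕ):ℤ) - m ≤ 0 := by omega
        rw [hag _ hle, hxt]
        simp only []
        have h1 := hry (p + L - 1) (by rw [hABlen]; omega) ⟨(k:ℕ) + 1, by omega⟩
        rw [hkey (p + L - 1) ((k:ℕ) + 1) (by omega) (by omega)] at h1
        rw [hab_b (p + L - 1 + ((k:ℕ) + 1)) (by have := k.isLt; omega) (by omega)] at h1
        have harg : 1 - ((A' ++ B).length : ℤ) + ((p + L - 1 : ℕ) : ℤ) + (((k:ℕ) + 1 : ℕ) : ℤ)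
            = 1 + (k:ℕ) - m + m := by
          rw [hABlen]; push_cast; omega
        rw [harg] at h1
        rw [h1, ← hS k]
        congr 1; omega

lemma dir2 (hinv : shiftMap '' X = X) (m : ℕ) (hD : PropertyD (blockSystem X (m + 1))) :
    PropertyD X := by
  intro b σ hbne hadm
  obtain ⟨x₁, hx₁, hocc⟩ := hadm
  obtain ⟨i, hr⟩ := occurs_iff.mp hocc
  rw [reads_append] at hr
  obtain ⟨hrb, hrs⟩ := hr
  set L₀ := b.length with hL₀def
  have hL₀ : 1 ≤ L₀ := List.length_pos_iff.mpr hbne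
  have hsig : σ = x₁ (i + (L₀:ℤ)) := by
    have := hrs 0 (by simp)
    simpa using this.symm
  -- extended word b₁ = e ++ b
  set e : List A := List.ofFn (fun q : Fin m => x₁ (i - m + ((q:ℕ):ℤ))) with he
  set b₁ := e ++ b with hb₁
  have hb₁len : b₁.length = m + L₀ := by simp [hb₁, he, hL₀def]
  have hb₁get : ∀ q : ℕ, (h : q < m + L₀) →
      b₁[q]'(by rw [hb₁len]; exact h) = x₁ (i - m + (q:ℤ)) := by
    intro q h
    rcases lt_or_ge q m with h1 | h1
    · rw [List.getElem_of_eq hb₁, List.getElem_append_left (by simp [he]; exact h1)]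
      rw [List.getElem_of_eq he, List.getElem_ofFn]
    · rw [List.getElem_of_eq hb₁, List.getElem_append_right (by simp [he]; exact h1)]
      have := hrb (q - e.length) (by simp [he]; omega)
      rw [← this]
      congr 1
      simp only [he, List.length_ofFn]
      omega
  -- block word B and letter Sg
  set B : List (Fin (m+1) → A) :=
    List.ofFn (fun j : Fin L₀ => fun k : Fin (m+1) => x₁ (i - m + (j:ℕ) + ((k:ℕ):ℤ))) with hB
  set Sg : Fin (m+1) → A := fun k => x₁ (i - m + (L₀:ℤ) + ((k:ℕ):ℤ)) with hSg
  have hBlen : B.length = L₀ := by simp [hB]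
  have hBne : B ≠ [] := by rw [← List.length_pos_iff, hBlen]; omega
  have hBget : ∀ (j : ℕ) (hj : j < L₀) (k : Fin (m+1)),
      (B[j]'(by rw [hBlen]; exact hj)) k = x₁ (i - m + (j:ℤ) + ((k:ℕ):ℤ)) := by
    intro j hj k
    rw [List.getElem_of_eq hB, List.getElem_ofFn]
  have hadmB : Admissible (blockSystem X (m+1)) (B ++ [Sg]) := by
    refine ⟨blockMap (m+1) x₁, ⟨x₁, hx₁, rfl⟩, occurs_iff.mpr ⟨i - m, ?_⟩⟩
    rw [reads_append, reads_block, reads_block]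
    constructor
    · intro q h k
      rw [hBget q (by rwa [hBlen] at h) k]
    · intro q h k
      have hq0 : q = 0 := by simpa using h
      subst hq0
      show x₁ (i - m + (B.length : ℤ) + ((0:ℕ):ℤ) + ((k:ℕ):ℤ)) = [Sg][0] k
      rw [List.getElem_singleton, hSg]
      congr 1
      rw [hBlen]
      push_cast
      ring
  obtain ⟨A'', hA''ne, hadmY, homY⟩ := hD B Sg hBne hadmB
  set p := A''.length with hpdef
  have hp1 : 1 ≤ p := List.length_pos_iff.mpr hA''ne
  have hABlen : (A'' ++ B).length = p + L₀ := by simp [hBlen, hpdef]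
  obtain ⟨y₂, hy₂, hocc₂⟩ := hadmY
  obtain ⟨x₂, hx₂, rfl⟩ := hy₂
  obtain ⟨i₂, hr₂⟩ := occurs_iff.mp hocc₂
  rw [reads_block] at hr₂
  set a₁ : List A := List.ofFn (fun q : Fin p => x₂ (i₂ + ((q:ℕ):ℤ))) with ha₁
  have ha₁len : a₁.length = p := by simp [ha₁]
  have ha₁ne : a₁ ≠ [] := by rw [← List.length_pos_iff, ha₁len]; omega
  have hablen : (a₁ ++ b₁).length = p + (m + L₀) := by simp [hb₁len, ha₁len]
  have hx₂reads : ∀ q : ℕ, (h : q < p + (m + L₀)) →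
      x₂ (i₂ + (q:ℤ)) = (a₁ ++ b₁)[q]'(by rw [hablen]; exact h) := by
    intro q h
    rcases lt_or_ge q p with h1 | h1
    · rw [List.getElem_append_left (by rwa [ha₁len])]
      rw [List.getElem_of_eq ha₁, List.getElem_ofFn]
    · rw [List.getElem_append_right (by rwa [ha₁len])]
      obtain ⟨j, k, hj, hk, hjk⟩ : ∃ j k : ℕ, j < L₀ ∧ k < m + 1 ∧ j + k = q - p :=
        ⟨min (q - p) (L₀ - 1), q - p - min (q - p) (L₀ - 1), by omega, by omega, by omega⟩
      have h2 := hr₂ (p + j) (by rw [hABlen]; omega) ⟨k, hk⟩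
      rw [List.getElem_append_right (by omega)] at h2
      rw [getElem_idx (show p + j - A''.length = j from by omega)] at h2
      rw [hBget j hj ⟨k, hk⟩] at h2
      rw [getElem_idx (show q - a₁.length = q - p from by rw [ha₁len])]
      rw [hb₁get (q - p) (by omega)]
      have h4 : x₂ (i₂ + (q:ℤ)) = x₂ (i₂ + ((p + j : ℕ) : ℤ) + (((⟨k, hk⟩ : Fin (m+1)) : ℕ) : ℤ)) := by
        congr 1
        simp only [Fin.val_mk]
        omega
      rw [h4, h2]
      congr 1
      simp only [Fin.val_mk]
      omega
  have hkey : ∀ (j k : ℕ) (hj : j < p + L₀) (hk : k < m + 1),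
      ((A'' ++ B)[j]'(by rw [hABlen]; exact hj)) (⟨k, hk⟩ : Fin (m+1)) =
        (a₁ ++ b₁)[j + k]'(by rw [hablen]; omega) := by
    intro j k hj hk
    have h1 := hr₂ j (by rw [hABlen]; exact hj) ⟨k, hk⟩
    rw [← h1, ← hx₂reads (j + k) (by omega)]
    congr 1
    simp only [Fin.val_mk]
    push_cast
    ring
  have hassoc : (a₁ ++ e) ++ b = a₁ ++ b₁ := by rw [hb₁, List.append_assoc]
  refine ⟨a₁ ++ e, by simp [ha₁ne], ?_, ?_⟩
  · rw [hassoc]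
    exact ⟨x₂, hx₂, occurs_iff.mpr ⟨i₂, fun q h => hx₂reads q (by rwa [hablen] at h)⟩⟩
  · rw [hassoc, omega1_iff]
    intro x₀ hx₀ h₀
    obtain ⟨x₆, hx₆, h₆⟩ := bwd_shift hinv m hx₀
    have hy₀ : Reads (blockMap (m+1) x₆) (1 - (((A'' ++ B).length : ℕ) : ℤ)) (A'' ++ B) := by
      rw [reads_block]
      intro j hj k
      have hj' : j < p + L₀ := by rwa [hABlen] at hj
      have hk' := k.isLt
      have e6 := h₆ (1 - (((A'' ++ B).length : ℕ) : ℤ) + (j:ℤ) + ((k:ℕ):ℤ) - m)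
      rw [show 1 - (((A'' ++ B).length : ℕ) : ℤ) + (j:ℤ) + ((k:ℕ):ℤ) - m + m
          = 1 - (((A'' ++ B).length : ℕ) : ℤ) + (j:ℤ) + ((k:ℕ):ℤ) by ring] at e6
      rw [e6]
      have h1 := h₀ (j + (k:ℕ)) (by rw [hablen]; omega)
      have h2 : ((A'' ++ B)[j]'hj) k = ((A'' ++ B)[j]'hj) (⟨(k:ℕ), k.isLt⟩ : Fin (m+1)) := by
        congr 1
      rw [h2, hkey j (k:ℕ) hj' k.isLt, ← h1]
      congr 1
      rw [hablen, hABlen]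
      push_cast
      ring
    obtain ⟨y₁, hy₁Y, hagY, hy₁1⟩ := omega1_iff.mp homY _ ⟨x₆, hx₆, rfl⟩ hy₀
    obtain ⟨x₇, hx₇, rfl⟩ := hy₁Y
    refine ⟨fun i' => x₇ (i' + (m:ℤ)), fwd_shift hinv m hx₇, ?_, ?_⟩
    · intro i' hi'
      have := congrFun (hagY i' hi') (⟨m, by omega⟩ : Fin (m+1))
      show x₇ (i' + (m:ℤ)) = x₀ i'
      rw [show x₇ (i' + (m:ℤ)) = blockMap (m+1) x₇ i' (⟨m, by omega⟩ : Fin (m+1)) from rfl]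
      rw [this]
      show x₆ (i' + ((m:ℕ):ℤ)) = x₀ i'
      exact h₆ i'
    · have := congrFun hy₁1 (⟨m, by omega⟩ : Fin (m+1))
      show x₇ (1 + (m:ℤ)) = σ
      rw [show x₇ (1 + (m:ℤ)) = blockMap (m+1) x₇ 1 (⟨m, by omega⟩ : Fin (m+1)) from rfl]
      rw [this, hSg, hsig]
      congr 1
      simp only [Fin.val_mk]
      push_cast
      ring

end Main


/-- For every `n ≥ 1`, a subshift has property (D) if and only if its
`n`-block system has property (D). -/
theorem stmt13 {A : Type*} [Fintype A] [Nonempty A] [TopologicalSpace A] [DiscreteTopology A]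
    (X : Set (ℤ → A)) (hX : IsSubshift X) (n : ℕ) (hn : 1 ≤ n) :
    PropertyD X ↔ PropertyD (blockSystem X n) := by
  obtain ⟨m, rfl⟩ : ∃ m, n = m + 1 := ⟨n - 1, by omega⟩
  obtain ⟨-, -, hinv⟩ := hX
  exact ⟨fun h => dir1 hinv m h, fun h => dir2 hinv m h⟩
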